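/- Partial GDAP of length n-1 ending at ordinate -1 are in one-to-one correspondence with nonempty GDAP of length n starting with an up-step, via the map that appends an up-step at the end, reflects the path about the x-axis, and takes the mirror image. -/

import Mathlib

open PowerSeries

def GoodSteps (p : List ℤ) : Prop :=
  (∀ s ∈ p, s = 1 ∨ s ≤ -1) ∧ List.Chain' (fun a b => a = 1 ∨ b = 1) p

def IsDAP (p : List ℤ) : Prop :=
  p ≠ [] ∧ GoodSteps p ∧ p.sum = 0 ∧ ∀ i, 0 ≤ (p.take i).sum

def IsGDAP (p : List ℤ) : Prop := GoodSteps p ∧ p.sum = 0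

noncomputable def dapCount (n : ℕ) : ℕ :=
  Nat.card {p : List ℤ // IsDAP p ∧ p.length = n}

def IsPartialGDAP (p : List ℤ) : Prop := GoodSteps p

def reflectPath (p : List ℤ) : List ℤ := p.map fun s => -s

def mirrorPath (p : List ℤ) : List ℤ := (p.map fun s => -s).reverse

lemma mirror_reflect (q : List ℤ) : mirrorPath (reflectPath q) = q.reverse := by
  simp [mirrorPath, reflectPath, List.map_map, Function.comp]

lemma goodSteps_reverse {p : List ℤ} (h : GoodSteps p) : GoodSteps p.reverse := by
  obtain ⟨h1, h2⟩ := h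
  refine ⟨fun s hs => h1 s (List.mem_reverse.mp hs), ?_⟩
  show List.IsChain _ _
  rw [List.isChain_reverse]
  exact List.IsChain.imp (fun a b h => h.symm) h2

theorem stmt7 : ∀ n : ℕ, 1 ≤ n →
    Set.BijOn (fun p => mirrorPath (reflectPath (p ++ [1])))
      {p : List ℤ | IsPartialGDAP p ∧ p.length = n - 1 ∧ p.sum = -1}
      {q : List ℤ | IsGDAP q ∧ q ≠ [] ∧ q.head? = some 1 ∧ q.length = n} := by
  intro n hn
  refine ⟨?_, ?_, ?_⟩
  · rintro p ⟨hg, hlen, hsum⟩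
    simp only [Set.mem_setOf_eq, mirror_reflect, List.reverse_append]
    have hrev : GoodSteps (1 :: p.reverse) := by
      obtain ⟨h1, h2⟩ := goodSteps_reverse hg
      refine ⟨?_, ?_⟩
      · rintro s hs
        rcases List.mem_cons.mp hs with h | h
        · exact Or.inl h
        · exact h1 s h
      · show List.IsChain _ _
        rw [List.isChain_cons]
        exact ⟨fun y _ => Or.inl rfl, h2⟩
    refine ⟨⟨?_, ?_⟩, ?_, ?_, ?_⟩
    · simpa using hrev
    · simp [List.sum_reverse, hsum]
    · simp
    · simp
    · simp [hlen]; omega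
  · intro p hp q hq h
    have h2 : p ++ [1] = q ++ [1] := by
      have := congrArg List.reverse h
      simpa [mirror_reflect] using this
    exact List.append_cancel_right h2
  · rintro q ⟨⟨hg, hsum⟩, hne, hhead, hlen⟩
    obtain ⟨a, t, rfl⟩ := List.exists_cons_of_ne_nil hne
    have ha : a = 1 := by simpa using hhead
    subst ha
    refine ⟨t.reverse, ⟨?_, ?_, ?_⟩, ?_⟩
    · exact goodSteps_reverse ⟨fun s hs => hg.1 s (List.mem_cons_of_mem _ hs),
        (List.isChain_cons.mp hg.2).2⟩
    · simp at hlen ⊢; omega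
    · have : (1 : ℤ) + t.sum = 0 := by simpa using hsum
      rw [List.sum_reverse]; omega
    · simp [mirror_reflect]
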